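/- There exists $u_0 \in L^2(\mathbb{R}^d)$ such that the solution $u(t) = e^{t\Delta} u_0$ of the heat equation satisfies $\int_0^T \|u(t)\|_{\dot H^2} \, dt = \infty$ for every $T > 0$; in particular $u \notin L^1(0,T; H^2(\mathbb{R}^d))$. -/

import Mathlib

open MeasureTheory Set

set_option maxHeartbeats 2000000 in
/-- There is `u₀ ∈ L²(ℝ^d)` (given here by its Fourier transform) such that the heat flow
`û(t,ξ) = û₀(ξ) e^{-t‖ξ‖²}` satisfies `∫_0^T ‖u(t)‖_{Ḣ²} dt = ∞` for every `T > 0`. -/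
theorem stmt_6 (d : ℕ) (hd : 1 ≤ d) :
    ∃ u₀ : EuclideanSpace ℝ (Fin d) → ℝ,
      Integrable (fun ξ => (u₀ ξ) ^ 2) ∧
      ∀ T : ℝ, 0 < T →
        (∫⁻ t in Ioc (0 : ℝ) T, ENNReal.ofReal
          (Real.sqrt (∫ ξ : EuclideanSpace ℝ (Fin d),
            ‖ξ‖ ^ 4 * (u₀ ξ * Real.exp (-t * ‖ξ‖ ^ 2)) ^ 2))) = ⊤ := by
  classical
  -- basis vector
  set e : EuclideanSpace ℝ (Fin d) := EuclideanSpace.single ⟨0, hd⟩ 1 with he_def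
  have he : ‖e‖ = 1 := by simp [he_def]
  set R : ℕ → ℝ := fun n => 2 ^ (n + 2) with hR_def
  have hRpos : ∀ n, 0 < R n := fun n => by positivity
  have hR4 : ∀ n, (4:ℝ) ≤ R n := by
    intro n
    have : (2:ℝ) ^ 2 ≤ 2 ^ (n + 2) := pow_le_pow_right₀ one_le_two (by omega)
    norm_num at this ⊢; linarith
  have hRdouble : ∀ m n, m < n → 2 * R m ≤ R n := by
    intro m n h
    have : (2:ℝ) ^ (m + 3) ≤ 2 ^ (n + 2) := pow_le_pow_right₀ one_le_two (by omega)
    calc 2 * R m = 2 ^ (m + 3) := by rw [hR_def]; ring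
    _ ≤ 2 ^ (n + 2) := this
  set c : ℕ → EuclideanSpace ℝ (Fin d) := fun n => (R n) • e with hc_def
  have hcnorm : ∀ n, ‖c n‖ = R n := by
    intro n
    rw [hc_def]
    rw [norm_smul, he, mul_one, Real.norm_eq_abs, abs_of_pos (hRpos n)]
  set B : ℕ → Set (EuclideanSpace ℝ (Fin d)) := fun n => Metric.ball (c n) 1 with hB_def
  have hBmeas : ∀ n, MeasurableSet (B n) := fun n => measurableSet_ball
  have hBdisj : Pairwise (Function.onFun Disjoint B) := by
    have key : ∀ m n, m < n → Disjoint (B m) (B n) := by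
      intro m n h
      apply Metric.ball_disjoint_ball
      have hdist : dist (c m) (c n) = R n - R m := by
        rw [dist_eq_norm, hc_def]
        have : R m • e - R n • e = (R m - R n) • e := by rw [sub_smul]
        rw [this, norm_smul, he, mul_one, Real.norm_eq_abs,
          abs_of_nonpos (by nlinarith [hRdouble m n h, hRpos m]), neg_sub]
      rw [hdist]
      nlinarith [hRdouble m n h, hR4 m]
    intro m n hmn
    rcases lt_or_gt_of_ne hmn with h | h
    · exact key m n h
    · exact (key n m h).symm
  -- ball membership facts
  have hmem : ∀ n ξ, ξ ∈ B n → R n - 1 ≤ ‖ξ‖ ∧ ‖ξ‖ ≤ R n + 1 := by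
    intro n ξ hξ
    have h1 : ‖ξ - c n‖ < 1 := by
      rw [hB_def] at hξ; rw [← dist_eq_norm]; exact hξ
    have h2 : |‖ξ‖ - ‖c n‖| ≤ ‖ξ - c n‖ := abs_norm_sub_norm_le _ _
    rw [hcnorm n] at h2
    have h3 := abs_le.mp h2
    constructor <;> nlinarith [hR4 n]
  -- volume of balls
  set V : ENNReal := volume (Metric.ball (0 : EuclideanSpace ℝ (Fin d)) 1) with hV_def
  have hBV : ∀ n, volume (B n) = V := fun n => Measure.addHaar_ball_center volume (c n) 1
  have hVpos : 0 < V := Metric.measure_ball_pos _ _ one_pos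
  have hVlt : V < ⊤ := measure_ball_lt_top
  set U : Set (EuclideanSpace ℝ (Fin d)) := ⋃ n, B n with hU_def
  have hUmeas : MeasurableSet U := MeasurableSet.iUnion hBmeas
  set g : EuclideanSpace ℝ (Fin d) → ℝ := fun ξ => (Real.log (2 + ‖ξ‖))⁻¹ with hg_def
  have hgmeas : Measurable g := by
    apply Measurable.inv
    exact Real.measurable_log.comp (measurable_const.add measurable_norm)
  -- log bounds on balls
  have hlog2 : (1:ℝ)/2 ≤ Real.log 2 ∧ Real.log 2 ≤ 1 := by
    constructor
    · linarith [Real.log_two_gt_d9]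
    · linarith [Real.log_two_lt_d9]
  have hgbound : ∀ n ξ, ξ ∈ B n → ((n:ℝ) + 3)⁻¹ ≤ g ξ ∧ g ξ ≤ 2 / ((n:ℝ) + 1) := by
    intro n ξ hξ
    obtain ⟨hlo, hhi⟩ := hmem n ξ hξ
    have hnorm0 : 0 ≤ ‖ξ‖ := norm_nonneg _
    have hlogpos : 0 < Real.log (2 + ‖ξ‖) := Real.log_pos (by linarith)
    have hub : Real.log (2 + ‖ξ‖) ≤ (n + 3 : ℝ) := by
      have h1 : 2 + ‖ξ‖ ≤ 2 ^ (n + 3) := by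
        have h2 : (2:ℝ) ^ (n+3) = 2 * R n := by rw [hR_def]; ring
        rw [h2]; nlinarith [hR4 n]
      calc Real.log (2 + ‖ξ‖) ≤ Real.log (2 ^ (n+3)) :=
            Real.log_le_log (by linarith) h1
      _ = ((n + 3 : ℕ) : ℝ) * Real.log 2 := Real.log_pow _ _
      _ ≤ ((n + 3 : ℕ) : ℝ) * 1 := mul_le_mul_of_nonneg_left hlog2.2 (by positivity)
      _ = (n + 3 : ℝ) := by push_cast; ring
    have hlb : ((n:ℝ) + 1) / 2 ≤ Real.log (2 + ‖ξ‖) := by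
      have h1 : (2:ℝ) ^ (n + 1) ≤ 2 + ‖ξ‖ := by
        have h2 : (2:ℝ) ^ (n+1) = R n / 2 := by rw [hR_def]; ring
        rw [h2]; nlinarith [hR4 n]
      calc ((n:ℝ) + 1) / 2 = ((n + 1 : ℕ) : ℝ) * (1/2) := by push_cast; ring
      _ ≤ ((n + 1 : ℕ) : ℝ) * Real.log 2 := mul_le_mul_of_nonneg_left hlog2.1 (by positivity)
      _ = Real.log (2 ^ (n+1)) := (Real.log_pow _ _).symm
      _ ≤ Real.log (2 + ‖ξ‖) := Real.log_le_log (by positivity) h1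
    constructor
    · show ((n:ℝ) + 3)⁻¹ ≤ (Real.log (2 + ‖ξ‖))⁻¹
      exact inv_anti₀ hlogpos hub
    · show (Real.log (2 + ‖ξ‖))⁻¹ ≤ 2 / ((n:ℝ) + 1)
      have h2 : (0:ℝ) < ((n:ℝ)+1)/2 := by positivity
      calc (Real.log (2 + ‖ξ‖))⁻¹ ≤ (((n:ℝ)+1)/2)⁻¹ := inv_anti₀ h2 hlb
      _ = 2 / ((n:ℝ)+1) := by rw [inv_div]
  refine ⟨U.indicator g, ?_, ?_⟩
  · -- integrability of u₀²
    have hsq : (fun ξ => (U.indicator g ξ)^2) = U.indicator (fun ξ => (g ξ)^2) := by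
      ext ξ; by_cases h : ξ ∈ U
      · simp [Set.indicator_of_mem h]
      · simp [Set.indicator_of_notMem h]
    rw [hsq, integrable_indicator_iff hUmeas]
    refine ⟨((hgmeas.pow_const 2).aestronglyMeasurable).restrict, ?_⟩
    rw [hasFiniteIntegral_iff_norm]
    have hsum : Summable (fun n : ℕ => 4 / ((n:ℝ)+1)^2) := by
      have h0 : Summable (fun n : ℕ => 1/((n:ℝ))^2) :=
        Real.summable_one_div_nat_pow.mpr one_lt_two
      have h1 := (summable_nat_add_iff 1).mpr h0
      apply Summable.congr (h1.mul_left 4)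
      intro n; push_cast; ring
    calc ∫⁻ ξ in U, ENNReal.ofReal ‖(g ξ)^2‖
        = ∑' n, ∫⁻ ξ in B n, ENNReal.ofReal ‖(g ξ)^2‖ := by
          rw [hU_def, lintegral_iUnion hBmeas hBdisj]
    _ ≤ ∑' n : ℕ, ENNReal.ofReal (4/((n:ℝ)+1)^2) * V := by
          apply ENNReal.tsum_le_tsum; intro n
          calc ∫⁻ ξ in B n, ENNReal.ofReal ‖(g ξ)^2‖
              ≤ ∫⁻ _ in B n, ENNReal.ofReal (4/((n:ℝ)+1)^2) := by
                apply setLIntegral_mono' (hBmeas n); intro ξ hξ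
                apply ENNReal.ofReal_le_ofReal
                obtain ⟨h1, h2⟩ := hgbound n ξ hξ
                have hg0 : 0 ≤ g ξ := le_trans (by positivity) h1
                rw [Real.norm_eq_abs, abs_of_nonneg (by positivity)]
                calc (g ξ)^2 ≤ (2/((n:ℝ)+1))^2 := pow_le_pow_left₀ hg0 h2 2
                _ = 4/((n:ℝ)+1)^2 := by rw [div_pow]; norm_num
          _ = ENNReal.ofReal (4/((n:ℝ)+1)^2) * V := by rw [setLIntegral_const, hBV n]
    _ = ENNReal.ofReal (∑' n : ℕ, 4/((n:ℝ)+1)^2) * V := by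
          rw [ENNReal.ofReal_tsum_of_nonneg (fun n => by positivity) hsum,
            ENNReal.tsum_mul_right]
    _ < ⊤ := ENNReal.mul_lt_top ENNReal.ofReal_lt_top hVlt
  · -- divergence of the Ḣ² norm in time
    intro T hT
    set x : ℕ → ℝ := fun m => ((R m)^2)⁻¹ with hx_def
    have hxpos : ∀ m, 0 < x m := fun m => by rw [hx_def]; positivity
    -- measurability of the ξ-integrand, for fixed t
    have hFmeas : ∀ t : ℝ, Measurable (fun ξ : EuclideanSpace ℝ (Fin d) =>
        ‖ξ‖^4 * (U.indicator g ξ * Real.exp (-t * ‖ξ‖^2))^2) := by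
      intro t
      refine (measurable_norm.pow_const 4).mul (Measurable.pow_const ?_ 2)
      exact (hgmeas.indicator hUmeas).mul
        (Real.measurable_exp.comp ((measurable_norm.pow_const 2).const_mul (-t)))
    have hFnn : ∀ (t : ℝ) (ξ : EuclideanSpace ℝ (Fin d)),
        0 ≤ ‖ξ‖^4 * (U.indicator g ξ * Real.exp (-t * ‖ξ‖^2))^2 := by
      intro t ξ; positivity
    set L : ℝ → ENNReal := fun t => ∫⁻ ξ,
      ENNReal.ofReal (‖ξ‖^4 * (U.indicator g ξ * Real.exp (-t * ‖ξ‖^2))^2) with hL_def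
    have hIeq : ∀ t : ℝ, (∫ ξ, ‖ξ‖^4 * (U.indicator g ξ * Real.exp (-t * ‖ξ‖^2))^2)
        = (L t).toReal := by
      intro t
      simp only [hL_def]
      exact integral_eq_lintegral_of_nonneg_ae (Filter.Eventually.of_forall (hFnn t))
        (hFmeas t).aestronglyMeasurable
    have hLdecomp : ∀ t : ℝ, L t = ∑' n : ℕ, ∫⁻ ξ in B n,
        ENNReal.ofReal (‖ξ‖^4 * (g ξ * Real.exp (-t * ‖ξ‖^2))^2) := by
      intro t
      simp only [hL_def]
      have hind : (fun ξ => ENNReal.ofReal (‖ξ‖^4 * (U.indicator g ξ * Real.exp (-t * ‖ξ‖^2))^2))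
          = U.indicator (fun ξ => ENNReal.ofReal (‖ξ‖^4 * (g ξ * Real.exp (-t * ‖ξ‖^2))^2)) := by
        ext ξ; by_cases h : ξ ∈ U
        · simp [Set.indicator_of_mem h]
        · simp [Set.indicator_of_notMem h]
      rw [hind, lintegral_indicator hUmeas, hU_def, lintegral_iUnion hBmeas hBdisj]
    -- finiteness of L t for t > 0
    have hRx : ∀ n : ℕ, (R n)^2 = 16 * 4^n := by
      intro n
      rw [hR_def]
      have h1 : ((2:ℝ)^(n+2))^2 = ((2:ℝ)^2)^(n+2) := by
        rw [← pow_mul, ← pow_mul, mul_comm]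
      rw [h1]
      norm_num [pow_add]
      ring
    have hLfin : ∀ t : ℝ, 0 < t → L t ≠ ⊤ := by
      intro t ht
      rw [hLdecomp t]
      have hexp : ∀ n : ℕ, Real.exp (-(t * (R n)^2 / 2)) ≤ 216 / (t * (R n)^2)^3 := by
        intro n
        have hy : 0 < t * (R n)^2 := by have := hRpos n; positivity
        have h1 : t * (R n)^2 / 6 ≤ Real.exp (t * (R n)^2 / 6) := by
          nlinarith [Real.add_one_le_exp (t * (R n)^2 / 6)]
        have h2 : (t * (R n)^2 / 6)^3 ≤ Real.exp (t * (R n)^2 / 2) := by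
          calc (t * (R n)^2 / 6)^3 ≤ (Real.exp (t * (R n)^2 / 6))^3 :=
                pow_le_pow_left₀ (by positivity) h1 3
          _ = Real.exp (3 * (t * (R n)^2 / 6)) := by
                rw [← Real.exp_nat_mul]; norm_num
          _ = Real.exp (t * (R n)^2 / 2) := by ring_nf
        rw [Real.exp_neg]
        calc (Real.exp (t * (R n)^2 / 2))⁻¹ ≤ ((t * (R n)^2 / 6)^3)⁻¹ :=
              inv_anti₀ (by positivity) h2
        _ = 216 / (t * (R n)^2)^3 := by
              rw [div_pow]; rw [inv_div]; norm_num
      have hperball : ∀ n : ℕ, (∫⁻ ξ in B n,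
          ENNReal.ofReal (‖ξ‖^4 * (g ξ * Real.exp (-t * ‖ξ‖^2))^2))
          ≤ ENNReal.ofReal ((864/t^3) * (1/4:ℝ)^n) * V := by
        intro n
        have hpt : ∀ ξ ∈ B n, ‖ξ‖^4 * (g ξ * Real.exp (-t * ‖ξ‖^2))^2
            ≤ (864/t^3) * (1/4:ℝ)^n := by
          intro ξ hξ
          obtain ⟨hlo, hhi⟩ := hmem n ξ hξ
          obtain ⟨hg1, hg2⟩ := hgbound n ξ hξ
          have hgpos : 0 ≤ g ξ := le_trans (by positivity) hg1
          have hg2' : g ξ ≤ 2 := le_trans hg2 (by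
            rw [div_le_iff₀ (by positivity : (0:ℝ) < (n:ℝ)+1)]
            nlinarith [Nat.cast_nonneg (α := ℝ) n])
          have hR := hRpos n; have hR4' := hR4 n
          have hnn : 0 ≤ ‖ξ‖ := norm_nonneg _
          have hle2 : ‖ξ‖ ≤ 2 * R n := by linarith
          have h2 : ‖ξ‖^4 ≤ 16 * (R n)^4 := by
            calc ‖ξ‖^4 ≤ (2 * R n)^4 := pow_le_pow_left₀ hnn hle2 4
            _ = 16 * (R n)^4 := by ring
          have h4 : Real.exp (-t * ‖ξ‖^2) ≤ Real.exp (-(t * (R n)^2 / 4)) := by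
            have hsq : (R n/2)^2 ≤ ‖ξ‖^2 := by nlinarith
            have hmul := mul_le_mul_of_nonneg_left hsq ht.le
            rw [Real.exp_le_exp]; nlinarith
          have h5 : (g ξ * Real.exp (-t * ‖ξ‖^2))^2
              ≤ (2 * Real.exp (-(t * (R n)^2 / 4)))^2 := by
            apply pow_le_pow_left₀ (by positivity)
            exact mul_le_mul hg2' h4 (Real.exp_pos _).le (by norm_num)
          have h6 : (2 * Real.exp (-(t * (R n)^2 / 4)))^2
              = 4 * Real.exp (-(t * (R n)^2 / 2)) := by
            rw [mul_pow, ← Real.exp_nat_mul]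
            norm_num
            ring_nf
          have h7 : ‖ξ‖^4 * (g ξ * Real.exp (-t * ‖ξ‖^2))^2
              ≤ 16 * (R n)^4 * (4 * Real.exp (-(t * (R n)^2 / 2))) := by
            rw [← h6]
            exact mul_le_mul h2 h5 (by positivity) (by positivity)
          have h8 : 16 * (R n)^4 * (4 * Real.exp (-(t * (R n)^2 / 2)))
              ≤ 16 * (R n)^4 * (4 * (216 / (t * (R n)^2)^3)) := by
            have := hexp n
            have h0 : (0:ℝ) ≤ 16 * (R n)^4 := by positivity
            nlinarith [Real.exp_pos (-(t * (R n)^2 / 2))]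
          have h9 : 16 * (R n)^4 * (4 * (216 / (t * (R n)^2)^3))
              = (864/t^3) * (1/4:ℝ)^n := by
            have h4n : (4:ℝ)^n ≠ 0 := by positivity
            have htne : t ≠ 0 := ht.ne'
            rw [show (R n)^4 = ((R n)^2)^2 by ring, hRx n,
              show (1/4:ℝ)^n = ((4:ℝ)^n)⁻¹ by rw [one_div, inv_pow]]
            field_simp
            ring
          linarith
        calc (∫⁻ ξ in B n, ENNReal.ofReal (‖ξ‖^4 * (g ξ * Real.exp (-t * ‖ξ‖^2))^2))
            ≤ ∫⁻ _ in B n, ENNReal.ofReal ((864/t^3) * (1/4:ℝ)^n) := by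
              apply setLIntegral_mono' (hBmeas n)
              intro ξ hξ
              exact ENNReal.ofReal_le_ofReal (hpt ξ hξ)
        _ = ENNReal.ofReal ((864/t^3) * (1/4:ℝ)^n) * V := by rw [setLIntegral_const, hBV n]
      have hsumg : Summable (fun n : ℕ => (864/t^3) * (1/4:ℝ)^n) :=
        (summable_geometric_of_lt_one (by norm_num) (by norm_num)).mul_left _
      have hfin : (∑' n : ℕ, ENNReal.ofReal ((864/t^3) * (1/4:ℝ)^n) * V) < ⊤ := by
        rw [ENNReal.tsum_mul_right,
          ← ENNReal.ofReal_tsum_of_nonneg (fun n => by positivity) hsumg]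
        exact ENNReal.mul_lt_top ENNReal.ofReal_lt_top hVlt
      exact (lt_of_le_of_lt (ENNReal.tsum_le_tsum hperball) hfin).ne
    -- endpoints of the time intervals
    have hxmono : ∀ m n : ℕ, m < n → x n ≤ x m / 2 := by
      intro m n h
      have h1 : 2 * R m ≤ R n := hRdouble m n h
      have h2 : 2 * (R m)^2 ≤ (R n)^2 := by nlinarith [hRpos m, hRpos n]
      have h3 : ((R n)^2)⁻¹ ≤ (2 * (R m)^2)⁻¹ := inv_anti₀ (by have := hRpos m; positivity) h2
      have h4 : (2 * (R m)^2)⁻¹ = ((R m)^2)⁻¹ / 2 := by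
        rw [mul_inv, div_eq_mul_inv, mul_comm]
      show ((R n)^2)⁻¹ ≤ ((R m)^2)⁻¹ / 2
      rw [← h4]; exact h3
    have hxmono' : ∀ m n : ℕ, m ≤ n → x n ≤ x m := by
      intro m n h
      rcases eq_or_lt_of_le h with rfl | h
      · exact le_refl _
      · linarith [hxmono m n h, hxpos m]
    obtain ⟨N, hN⟩ := exists_pow_lt_of_lt_one hT (by norm_num : (1/2:ℝ) < 1)
    have hxle : ∀ m : ℕ, x m ≤ (1/2:ℝ)^m := by
      intro m
      have h1 : (2:ℝ)^m ≤ (R m)^2 := by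
        have h2 : (2:ℝ)^m ≤ 2^(2*m+4) := pow_le_pow_right₀ one_le_two (by omega)
        have h3 : ((2:ℝ)^(m+2))^2 = 2^(2*m+4) := by rw [← pow_mul]; ring_nf
        rw [hR_def]; rw [h3]; exact h2
      calc x m = ((R m)^2)⁻¹ := rfl
      _ ≤ ((2:ℝ)^m)⁻¹ := inv_anti₀ (by positivity) h1
      _ = (1/2:ℝ)^m := by rw [one_div, inv_pow]
    have hxNT : x N < T := lt_of_le_of_lt (hxle N) hN
    set Vr : ℝ := V.toReal with hVr_def
    have hVrpos : 0 < Vr := ENNReal.toReal_pos hVpos.ne' hVlt.ne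
    set P : ℕ → ℝ := fun m => (R m/2)^4 * (((m:ℝ)+3)⁻¹ * Real.exp (-4))^2 with hP_def
    have hPnn : ∀ m, 0 ≤ P m := by
      intro m; simp only [hP_def]; positivity
    -- pointwise lower bound on B m for times in the m-th interval
    have hptlow : ∀ (m : ℕ) (t : ℝ), t ∈ Ioc (x m/2) (x m) → ∀ ξ ∈ B m,
        P m ≤ ‖ξ‖^4 * (U.indicator g ξ * Real.exp (-t * ‖ξ‖^2))^2 := by
      intro m t ht ξ hξ
      have hxm := hxpos m
      have htpos : 0 < t := lt_trans (by linarith) ht.1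
      obtain ⟨hlo, hhi⟩ := hmem m ξ hξ
      obtain ⟨hg1, _⟩ := hgbound m ξ hξ
      have hind : U.indicator g ξ = g ξ :=
        Set.indicator_of_mem (Set.mem_iUnion.mpr ⟨m, hξ⟩) g
      rw [hind]
      have hR := hRpos m; have hR4' := hR4 m
      have hnn := norm_nonneg ξ
      have htn : t * ‖ξ‖^2 ≤ 4 := by
        have h1 : ‖ξ‖^2 ≤ 4 * (R m)^2 := by nlinarith
        have h3 : x m * (R m)^2 = 1 := by
          show ((R m)^2)⁻¹ * (R m)^2 = 1
          exact inv_mul_cancel₀ (by positivity)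
        have h5 : t * ‖ξ‖^2 ≤ x m * ‖ξ‖^2 :=
          mul_le_mul_of_nonneg_right ht.2 (by positivity)
        have h6 : x m * ‖ξ‖^2 ≤ x m * (4 * (R m)^2) :=
          mul_le_mul_of_nonneg_left h1 hxm.le
        nlinarith
      have hexp4 : Real.exp (-4) ≤ Real.exp (-t * ‖ξ‖^2) := by
        rw [Real.exp_le_exp]; linarith
      have hglow : ((m:ℝ)+3)⁻¹ * Real.exp (-4) ≤ g ξ * Real.exp (-t * ‖ξ‖^2) :=
        mul_le_mul hg1 hexp4 (Real.exp_pos _).le (le_trans (by positivity) hg1)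
      have h1 : (R m/2)^4 ≤ ‖ξ‖^4 := pow_le_pow_left₀ (by positivity) (by linarith) 4
      have h2 : (((m:ℝ)+3)⁻¹ * Real.exp (-4))^2 ≤ (g ξ * Real.exp (-t * ‖ξ‖^2))^2 :=
        pow_le_pow_left₀ (by positivity) hglow 2
      show (R m/2)^4 * (((m:ℝ)+3)⁻¹ * Real.exp (-4))^2 ≤ _
      exact mul_le_mul h1 h2 (by positivity) (by positivity)
    -- per-interval lower bound for the time integral
    have hper : ∀ m : ℕ, ENNReal.ofReal (Real.exp (-4) * Real.sqrt Vr / 8 * (((m:ℝ)+3)⁻¹)) ≤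
        ∫⁻ t in Ioc (x m/2) (x m), ENNReal.ofReal
          (Real.sqrt (∫ ξ, ‖ξ‖^4 * (U.indicator g ξ * Real.exp (-t * ‖ξ‖^2))^2)) := by
      intro m
      have hxm := hxpos m
      have hsqrt : ∀ t ∈ Ioc (x m/2) (x m), Real.sqrt (P m * Vr) ≤
          Real.sqrt (∫ ξ, ‖ξ‖^4 * (U.indicator g ξ * Real.exp (-t * ‖ξ‖^2))^2) := by
        intro t ht
        have htpos : 0 < t := lt_trans (by linarith) ht.1
        apply Real.sqrt_le_sqrt
        rw [hIeq t]
        have hLlow : ENNReal.ofReal (P m) * V ≤ L t := by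
          calc ENNReal.ofReal (P m) * V = ∫⁻ _ in B m, ENNReal.ofReal (P m) := by
                rw [setLIntegral_const, hBV m]
          _ ≤ ∫⁻ ξ in B m, ENNReal.ofReal
                (‖ξ‖^4 * (U.indicator g ξ * Real.exp (-t * ‖ξ‖^2))^2) :=
              setLIntegral_mono' (hBmeas m)
                (fun ξ hξ => ENNReal.ofReal_le_ofReal (hptlow m t ht ξ hξ))
          _ ≤ L t := by
              simp only [hL_def]
              exact setLIntegral_le_lintegral _ _
        have hmono := ENNReal.toReal_mono (hLfin t htpos) hLlow
        rw [ENNReal.toReal_mul, ENNReal.toReal_ofReal (hPnn m)] at hmono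
        exact hmono
      have hval : Real.exp (-4) * Real.sqrt Vr / 8 * (((m:ℝ)+3)⁻¹) ≤
          Real.sqrt (P m * Vr) * (x m - x m/2) := by
        have h1 : P m * Vr = ((R m/2)^2 * (((m:ℝ)+3)⁻¹ * Real.exp (-4)))^2 * Vr := by
          simp only [hP_def]; ring
        rw [h1, Real.sqrt_mul (sq_nonneg _), Real.sqrt_sq (by positivity)]
        have hxval : x m - x m/2 = ((R m)^2)⁻¹ / 2 := by
          show ((R m)^2)⁻¹ - ((R m)^2)⁻¹/2 = ((R m)^2)⁻¹ / 2
          ring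
        rw [hxval]
        have hRne : R m ≠ 0 := (hRpos m).ne'
        apply le_of_eq
        field_simp
        ring
      calc ENNReal.ofReal (Real.exp (-4) * Real.sqrt Vr / 8 * (((m:ℝ)+3)⁻¹))
          ≤ ENNReal.ofReal (Real.sqrt (P m * Vr) * (x m - x m/2)) :=
            ENNReal.ofReal_le_ofReal hval
      _ = ENNReal.ofReal (Real.sqrt (P m * Vr)) * ENNReal.ofReal (x m - x m/2) :=
            ENNReal.ofReal_mul (Real.sqrt_nonneg _)
      _ = ENNReal.ofReal (Real.sqrt (P m * Vr)) * volume (Ioc (x m/2) (x m)) := by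
            rw [Real.volume_Ioc]
      _ = ∫⁻ _ in Ioc (x m/2) (x m), ENNReal.ofReal (Real.sqrt (P m * Vr)) :=
            (setLIntegral_const _ _).symm
      _ ≤ ∫⁻ t in Ioc (x m/2) (x m), ENNReal.ofReal
            (Real.sqrt (∫ ξ, ‖ξ‖^4 * (U.indicator g ξ * Real.exp (-t * ‖ξ‖^2))^2)) :=
            setLIntegral_mono' measurableSet_Ioc
              (fun t ht => ENNReal.ofReal_le_ofReal (hsqrt t ht))
    -- divergence of the harmonic-type series
    have hdiv : (∑' k : ℕ, ENNReal.ofReal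
        (Real.exp (-4) * Real.sqrt Vr / 8 * (((k:ℝ)+(N:ℝ)+3)⁻¹))) = ⊤ := by
      by_contra hne
      have hκpos : (0:ℝ) < Real.exp (-4) * Real.sqrt Vr / 8 := by positivity
      have h1 : Summable (fun k : ℕ =>
          (Real.exp (-4) * Real.sqrt Vr / 8 * (((k:ℝ)+(N:ℝ)+3)⁻¹)).toNNReal) :=
        ENNReal.tsum_coe_ne_top_iff_summable.mp hne
      have h2 : Summable (fun k : ℕ =>
          Real.exp (-4) * Real.sqrt Vr / 8 * (((k:ℝ)+(N:ℝ)+3)⁻¹)) := by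
        refine Summable.congr (NNReal.summable_coe.mpr h1) (fun k => ?_)
        exact Real.coe_toNNReal _ (by positivity)
      have h3 : Summable (fun k : ℕ => (((k:ℝ)+(N:ℝ)+3)⁻¹)) := by
        refine Summable.congr (h2.mul_left (Real.exp (-4) * Real.sqrt Vr / 8)⁻¹) (fun k => ?_)
        field_simp
      have h4 : Summable (fun k : ℕ => 1/((k + (N+3) : ℕ):ℝ)) := by
        refine Summable.congr h3 (fun k => ?_)
        rw [one_div]
        congr 1
        push_cast; ring
      exact Real.not_summable_one_div_natCast ((summable_nat_add_iff (N+3)).mp h4)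
    -- disjointness of the intervals
    have hIdisj : Pairwise (Function.onFun Disjoint (fun k : ℕ => Ioc (x (k+N)/2) (x (k+N)))) := by
      have key : ∀ a b : ℕ, a < b →
          Disjoint (Ioc (x (a+N)/2) (x (a+N))) (Ioc (x (b+N)/2) (x (b+N))) := by
        intro a b h
        have h1 : x (b+N) ≤ x (a+N) / 2 := hxmono _ _ (by omega)
        rw [Set.Ioc_disjoint_Ioc]
        calc x (a+N) ⊓ x (b+N) ≤ x (b+N) := inf_le_right
        _ ≤ x (a+N)/2 := h1
        _ ≤ x (a+N)/2 ⊔ x (b+N)/2 := le_sup_left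
      intro a b hab
      rcases lt_or_gt_of_ne hab with h | h
      · exact key a b h
      · exact (key b a h).symm
    have hsub : (⋃ k : ℕ, Ioc (x (k+N)/2) (x (k+N))) ⊆ Ioc 0 T := by
      intro t ht
      obtain ⟨k, hk⟩ := Set.mem_iUnion.mp ht
      have hxk := hxpos (k+N)
      constructor
      · exact lt_trans (by linarith) hk.1
      · exact le_trans hk.2 (le_of_lt (lt_of_le_of_lt (hxmono' N (k+N) (by omega)) hxNT))
    -- conclusion
    rw [eq_top_iff]
    calc (⊤:ENNReal) = ∑' k : ℕ, ENNReal.ofReal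
          (Real.exp (-4) * Real.sqrt Vr / 8 * (((k:ℝ)+(N:ℝ)+3)⁻¹)) := hdiv.symm
    _ ≤ ∑' k : ℕ, ∫⁻ t in Ioc (x (k+N)/2) (x (k+N)), ENNReal.ofReal
          (Real.sqrt (∫ ξ, ‖ξ‖^4 * (U.indicator g ξ * Real.exp (-t * ‖ξ‖^2))^2)) := by
        apply ENNReal.tsum_le_tsum
        intro k
        have hcast : (((k+N : ℕ):ℝ)+3)⁻¹ = (((k:ℝ)+(N:ℝ)+3)⁻¹) := by push_cast; ring
        have := hper (k+N)
        rw [hcast] at this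
        exact this
    _ = ∫⁻ t in ⋃ k : ℕ, Ioc (x (k+N)/2) (x (k+N)), ENNReal.ofReal
          (Real.sqrt (∫ ξ, ‖ξ‖^4 * (U.indicator g ξ * Real.exp (-t * ‖ξ‖^2))^2)) :=
        (lintegral_iUnion (fun k => measurableSet_Ioc) hIdisj _).symm
    _ ≤ ∫⁻ t in Ioc 0 T, ENNReal.ofReal
          (Real.sqrt (∫ ξ, ‖ξ‖^4 * (U.indicator g ξ * Real.exp (-t * ‖ξ‖^2))^2)) :=
        lintegral_mono_set hsub
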